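/- For every simple digraph D on n ≥ 2 vertices, if t = MaxDiCut(D) is the size of a largest directed cut of D, then (n/2)·t ≤ MaxDLA(D) ≤ (n−1)·t, where MaxDLA(D) is the maximum value of an arrangement of D. -/

import Mathlib

open Finset

/-- Integer value of an edge under an arrangement: max {0, π(head) − π(tail)}. -/
def edgeVal {n : ℕ} (π : Equiv.Perm (Fin n)) (e : Fin n × Fin n) : ℤ :=
  max 0 ((π e.2 : ℤ) - (π e.1 : ℤ))

/-- Value of an arrangement (integer version). -/
def arrVal {n : ℕ} (E : Finset (Fin n × Fin n)) (π : Equiv.Perm (Fin n)) : ℤ :=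
  ∑ e ∈ E, edgeVal π e

/-- Value of an arrangement (natural-number version, using truncated subtraction). -/
def valN {n : ℕ} (E : Finset (Fin n × Fin n)) (π : Equiv.Perm (Fin n)) : ℕ :=
  ∑ e ∈ E, ((π e.2 : ℕ) - (π e.1 : ℕ))

/-- Size of the k-th cut of an arrangement (positions are 0-indexed, cuts 1-indexed:
`cutAt E π k` counts edges from the first k vertices to the rest). -/
def cutAt {n : ℕ} (E : Finset (Fin n × Fin n)) (π : Equiv.Perm (Fin n)) (k : ℕ) : ℕ :=
  (E.filter (fun e => (π e.1 : ℕ) < k ∧ k ≤ (π e.2 : ℕ))).card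

def outdeg {n : ℕ} (E : Finset (Fin n × Fin n)) (v : Fin n) : ℕ :=
  (E.filter (fun e => e.1 = v)).card

def indeg {n : ℕ} (E : Finset (Fin n × Fin n)) (v : Fin n) : ℕ :=
  (E.filter (fun e => e.2 = v)).card

/-- Number of edges in the directed cut from X to its complement. -/
def dicut {n : ℕ} (E : Finset (Fin n × Fin n)) (X : Finset (Fin n)) : ℕ :=
  (E.filter (fun e => e.1 ∈ X ∧ e.2 ∉ X)).card

/-- Size of a maximum directed cut of E. -/
def maxDiCut {n : ℕ} (E : Finset (Fin n × Fin n)) : ℕ :=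
  (univ : Finset (Finset (Fin n))).sup (dicut E)

/-- Maximum value of an arrangement of E. -/
def maxDLA {n : ℕ} (E : Finset (Fin n × Fin n)) : ℕ :=
  (univ : Finset (Equiv.Perm (Fin n))).sup (valN E)

lemma valN_eq_sum_cutAt {n : ℕ} (E : Finset (Fin n × Fin n)) (π : Equiv.Perm (Fin n)) :
    valN E π = ∑ k ∈ Ico 1 n, cutAt E π k := by
  unfold valN cutAt
  simp_rw [Finset.card_filter]
  rw [Finset.sum_comm]
  refine Finset.sum_congr rfl fun e _ => ?_
  rw [← Finset.card_filter]
  have hfe : (Ico 1 n).filter (fun k => (π e.1 : ℕ) < k ∧ k ≤ (π e.2 : ℕ))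
      = Ico ((π e.1 : ℕ) + 1) ((π e.2 : ℕ) + 1) := by
    ext k
    have h2 := (π e.2).isLt
    simp only [Finset.mem_filter, Finset.mem_Ico]
    omega
  rw [hfe, Nat.card_Ico]
  omega

lemma cutAt_le_maxDiCut {n : ℕ} (E : Finset (Fin n × Fin n)) (π : Equiv.Perm (Fin n))
    (k : ℕ) : cutAt E π k ≤ maxDiCut E := by
  have h : cutAt E π k = dicut E (univ.filter fun v => (π v : ℕ) < k) := by
    unfold cutAt dicut
    congr 1
    apply Finset.filter_congr
    intro e _
    simp only [Finset.mem_filter, Finset.mem_univ, true_and]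
    omega
  rw [h]
  exact Finset.le_sup (Finset.mem_univ _)

lemma valN_le_maxDLA {n : ℕ} (E : Finset (Fin n × Fin n)) (π : Equiv.Perm (Fin n)) :
    valN E π ≤ maxDLA E := Finset.le_sup (Finset.mem_univ _)

/-- (n/2)·MaxDiCut(D) ≤ MaxDLA(D) ≤ (n−1)·MaxDiCut(D). -/
theorem stmt8 (n : ℕ) (hn : 2 ≤ n) (E : Finset (Fin n × Fin n))
    (hs : ∀ e ∈ E, e.1 ≠ e.2) :
    n * maxDiCut E ≤ 2 * maxDLA E ∧ maxDLA E ≤ (n - 1) * maxDiCut E := by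
  constructor
  · -- lower bound
    obtain ⟨X, -, hX⟩ := Finset.exists_mem_eq_sup (univ : Finset (Finset (Fin n)))
      ⟨∅, Finset.mem_univ _⟩ (dicut E)
    set a := X.card with ha_def
    have ha : a ≤ n := by
      have := X.card_le_univ
      simpa using this
    -- a permutation sending X to positions < a
    obtain ⟨π, hπ1, hπ2⟩ : ∃ π : Equiv.Perm (Fin n),
        (∀ v, v ∈ X → (π v : ℕ) < a) ∧ (∀ v, v ∉ X → a ≤ (π v : ℕ)) := by
      classical
      let e1 : {x : Fin n // x ∈ X} ≃ Fin a := X.equivFin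
      let e2 : {x : Fin n // x ∉ X} ≃ Fin (n - a) :=
        ((Equiv.subtypeEquivRight (fun x => by simp)).trans Xᶜ.equivFin).trans
          (finCongr (by rw [Finset.card_compl, Fintype.card_fin]))
      refine ⟨((Equiv.sumCompl (· ∈ X)).symm.trans ((e1.sumCongr e2).trans
        (finSumFinEquiv.trans (finCongr (Nat.add_sub_cancel' ha))))), ?_, ?_⟩
      · intro v hv
        simp only [Equiv.trans_apply, Equiv.sumCompl_symm_apply_of_pos hv,
          Equiv.sumCongr_apply, Sum.map_inl, finSumFinEquiv_apply_left, finCongr_apply,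
          Fin.coe_cast, Fin.coe_castAdd]
        exact (e1 ⟨v, hv⟩).isLt
      · intro v hv
        simp only [Equiv.trans_apply, Equiv.sumCompl_symm_apply_of_neg hv,
          Equiv.sumCongr_apply, Sum.map_inr, finSumFinEquiv_apply_right, finCongr_apply,
          Fin.coe_cast, Fin.coe_natAdd]
        exact Nat.le_add_right _ _
    -- the block-reversing involution
    have hσb : ∀ k : Fin n, (if (k : ℕ) < a then a - 1 - (k : ℕ) else n - 1 + a - (k : ℕ)) < n := by
      intro k
      have := k.isLt
      split_ifs <;> omega
    let f : Fin n → Fin n := fun k => ⟨_, hσb k⟩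
    have hf : Function.Involutive f := by
      intro k
      have := k.isLt
      apply Fin.ext
      simp only [f]
      split_ifs <;> omega
    let π' : Equiv.Perm (Fin n) := π.trans (hf.toPerm)
    have hπ' : ∀ v : Fin n, (π' v : ℕ)
        = if (π v : ℕ) < a then a - 1 - (π v : ℕ) else n - 1 + a - (π v : ℕ) := fun v => rfl
    -- per cut edge, the two contributions sum to n
    set C := E.filter (fun e => e.1 ∈ X ∧ e.2 ∉ X) with hC
    have hkey : ∀ e ∈ C, n ≤ ((π e.2 : ℕ) - (π e.1 : ℕ)) + ((π' e.2 : ℕ) - (π' e.1 : ℕ)) := by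
      intro e he
      rw [hC, Finset.mem_filter] at he
      obtain ⟨-, h1, h2⟩ := he
      have hu : (π e.1 : ℕ) < a := hπ1 _ h1
      have hv : a ≤ (π e.2 : ℕ) := hπ2 _ h2
      have hv' := (π e.2).isLt
      rw [hπ' e.1, hπ' e.2, if_pos hu, if_neg (by omega)]
      omega
    have hsum : n * maxDiCut E ≤ valN E π + valN E π' := by
      have h1 : n * maxDiCut E = ∑ _e ∈ C, n := by
        rw [Finset.sum_const, smul_eq_mul]
        unfold maxDiCut
        rw [hX]
        unfold dicut
        rw [← hC]
        ring
      rw [h1]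
      calc ∑ e ∈ C, n ≤ ∑ e ∈ C, (((π e.2 : ℕ) - (π e.1 : ℕ)) + ((π' e.2 : ℕ) - (π' e.1 : ℕ))) :=
            Finset.sum_le_sum hkey
        _ ≤ ∑ e ∈ E, (((π e.2 : ℕ) - (π e.1 : ℕ)) + ((π' e.2 : ℕ) - (π' e.1 : ℕ))) :=
            Finset.sum_le_sum_of_subset (Finset.filter_subset _ _)
        _ = valN E π + valN E π' := by rw [valN, valN, Finset.sum_add_distrib]
    calc n * maxDiCut E ≤ valN E π + valN E π' := hsum
      _ ≤ maxDLA E + maxDLA E := Nat.add_le_add (valN_le_maxDLA E π) (valN_le_maxDLA E π')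
      _ = 2 * maxDLA E := by ring
  · -- upper bound
    apply Finset.sup_le
    intro π _
    rw [valN_eq_sum_cutAt]
    have := Finset.sum_le_card_nsmul (Ico 1 n) (cutAt E π) (maxDiCut E)
      (fun k _ => cutAt_le_maxDiCut E π k)
    simpa [Nat.card_Ico, Nat.mul_comm] using this
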